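/- arXiv:2406.01499 — 3 statements merged into one kernel-verified Lean document; each statement's English description precedes it below -/
import Mathlib

section
/- Let A = {p₁,p₂,p₃} be three non-collinear points in the grid [n]², and let s* be a positive integer. The number of grid points p such that {p,p₁,p₂,p₃} forms a trapezoid whose pair of parallel sides lie on lines ℓ₁,ℓ₂ with H(ℓ₁),H(ℓ₂) ≥ s* is at most C·n/s* for an absolute constant C. -/
def inGrid (n : ℕ) (p : ℤ × ℤ) : Prop :=
  1 ≤ p.1 ∧ p.1 ≤ n ∧ 1 ≤ p.2 ∧ p.2 ≤ n

def Collin (a b c : ℤ × ℤ) : Prop :=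
  (b.1 - a.1) * (c.2 - a.2) = (b.2 - a.2) * (c.1 - a.1)

def Par (u w : ℤ × ℤ) : Prop := u.1 * w.2 = u.2 * w.1

def NoThreeCollin (a b c d : ℤ × ℤ) : Prop :=
  ¬Collin a b c ∧ ¬Collin a b d ∧ ¬Collin a c d ∧ ¬Collin b c d

/-- `H` of the line through two distinct lattice points `a, b`: with the direction
`(b.1 - a.1, b.2 - a.2)` reduced by its gcd to `(v, u)` (so the slope is `u/v` in lowest
terms up to sign), `H = max(|u|, |v|)`. -/
def HLine (a b : ℤ × ℤ) : ℕ :=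
  max ((b.2 - a.2).natAbs / Int.gcd (b.1 - a.1) (b.2 - a.2))
      ((b.1 - a.1).natAbs / Int.gcd (b.1 - a.1) (b.2 - a.2))

/-- The four points form a trapezoid with the parallel pair of sides `{a,b}` and `{c,d}`. -/
def TrapPair (a b c d : ℤ × ℤ) : Prop :=
  NoThreeCollin a b c d ∧ Par (b - a) (d - c)

lemma par_primitive {d u : ℤ × ℤ} (hd : Int.gcd d.1 d.2 = 1)
    (h : u.1 * d.2 = u.2 * d.1) : ∃ t : ℤ, u.1 = t * d.1 ∧ u.2 = t * d.2 := by
  have hc : IsCoprime d.1 d.2 := Int.isCoprime_iff_gcd_eq_one.mpr hd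
  rcases eq_or_ne d.1 0 with h1 | h1
  · have h2 : d.2 = 1 ∨ d.2 = -1 := by
      have : d.2.natAbs = 1 := by simpa [Int.gcd, h1] using hd
      omega
    have hu1 : u.1 = 0 := by
      rcases h2 with h2 | h2 <;> rw [h1, h2] at h <;> omega
    refine ⟨u.2 * d.2, by simp [h1, hu1], ?_⟩
    rcases h2 with h2 | h2 <;> rw [h2] <;> ring
  · have hd2 : d.1 ∣ u.1 * d.2 := ⟨u.2, by linarith⟩
    have hdvd : d.1 ∣ u.1 := hc.dvd_of_dvd_mul_right hd2
    obtain ⟨t, ht⟩ := hdvd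
    refine ⟨t, by rw [ht]; ring, ?_⟩
    have h3 : u.2 * d.1 = t * d.2 * d.1 := by rw [← h, ht]; ring
    exact mul_right_cancel₀ h1 h3

set_option maxHeartbeats 1000000 in
lemma line_bound (n s : ℕ) (q a b : ℤ × ℤ) (hs : 0 < s)
    (hq : inGrid n q) (ha : inGrid n a) (hb : inGrid n b)
    (hH : s ≤ HLine a b) :
    {p : ℤ × ℤ | inGrid n p ∧ Par (q - p) (b - a)}.Finite ∧
    ({p : ℤ × ℤ | inGrid n p ∧ Par (q - p) (b - a)}.ncard : ℝ) ≤ 3 * n / s := by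
  obtain ⟨hq1, hq2, hq3, hq4⟩ := hq
  obtain ⟨ha1, ha2, ha3, ha4⟩ := ha
  obtain ⟨hb1, hb2, hb3, hb4⟩ := hb
  set w1 : ℤ := b.1 - a.1 with hw1
  set w2 : ℤ := b.2 - a.2 with hw2
  set g : ℕ := Int.gcd w1 w2 with hg
  have hHdef : HLine a b = max (w2.natAbs / g) (w1.natAbs / g) := rfl
  have hg0 : 0 < g := by
    rcases Nat.eq_zero_or_pos g with h0 | h0
    · exfalso
      have : HLine a b = 0 := by rw [hHdef, h0]; simp
      omega
    · exact h0
  have hgz : (g : ℤ) ≠ 0 := by exact_mod_cast hg0.ne'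
  have hdvd1 : (g : ℤ) ∣ w1 := Int.gcd_dvd_left w1 w2
  have hdvd2 : (g : ℤ) ∣ w2 := Int.gcd_dvd_right w1 w2
  set d1 : ℤ := w1 / g with hd1def
  set d2 : ℤ := w2 / g with hd2def
  have hd1 : w1 = g * d1 := (Int.mul_ediv_cancel' hdvd1).symm
  have hd2 : w2 = g * d2 := (Int.mul_ediv_cancel' hdvd2).symm
  have hdprim : Int.gcd d1 d2 = 1 := Int.gcd_div_gcd_div_gcd hg0
  have habs1 : w1.natAbs = g * d1.natAbs := by
    rw [hd1, Int.natAbs_mul, Int.natAbs_natCast]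
  have habs2 : w2.natAbs = g * d2.natAbs := by
    rw [hd2, Int.natAbs_mul, Int.natAbs_natCast]
  have hH' : s ≤ max d2.natAbs d1.natAbs := by
    rw [hHdef, habs1, habs2, Nat.mul_div_cancel_left _ hg0, Nat.mul_div_cancel_left _ hg0] at hH
    exact hH
  have hwb1 : w1.natAbs ≤ n - 1 := by omega
  have hwb2 : w2.natAbs ≤ n - 1 := by omega
  have hdgb1 : d1.natAbs ≤ n - 1 := by nlinarith [Nat.le_mul_of_pos_left d1.natAbs hg0]
  have hdgb2 : d2.natAbs ≤ n - 1 := by nlinarith [Nat.le_mul_of_pos_left d2.natAbs hg0]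
  have hn1 : 1 ≤ n := by omega
  clear_value d1 d2 g
  have hsn : s ≤ n - 1 := by omega
  set T : ℤ := ((n : ℤ) - 1) / s with hT
  have hT0 : 0 ≤ T := Int.ediv_nonneg (by omega) (by positivity)
  have hTs : T * (s : ℤ) ≤ (n : ℤ) - 1 :=
    (Int.le_ediv_iff_mul_le (by exact_mod_cast hs)).mp (le_refl T)
  clear_value T
  have hsub : {p : ℤ × ℤ | inGrid n p ∧ Par (q - p) (b - a)} ⊆
      (fun t : ℤ => ((q.1 - t * d1, q.2 - t * d2) : ℤ × ℤ)) '' (Set.Icc (-T) T) := by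
    rintro p ⟨⟨hp1, hp2, hp3, hp4⟩, hpar⟩
    have hpar0 : (q.1 - p.1) * w2 = (q.2 - p.2) * w1 := hpar
    have hpar' : (q.1 - p.1) * d2 = (q.2 - p.2) * d1 := by
      apply mul_left_cancel₀ hgz
      rw [hd1, hd2] at hpar0
      linarith [hpar0]
    obtain ⟨t, ht1, ht2⟩ := par_primitive (d := (d1, d2)) (u := (q.1 - p.1, q.2 - p.2)) hdprim hpar'
    have ht1' : q.1 - p.1 = t * d1 := ht1
    have ht2' : q.2 - p.2 = t * d2 := ht2
    clear ht1 ht2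
    have htb : |t| ≤ T := by
      rw [hT]
      rw [Int.le_ediv_iff_mul_le (by exact_mod_cast hs)]
      rcases le_max_iff.mp hH' with hcase | hcase
      · have h5 : |t| * (s : ℤ) ≤ |t| * |d2| := by
          apply mul_le_mul_of_nonneg_left _ (abs_nonneg t)
          rw [← Int.natCast_natAbs d2]
          exact_mod_cast hcase
        have h6 : |t * d2| = |q.2 - p.2| := by rw [← ht2']
        have h7 : |q.2 - p.2| ≤ (n : ℤ) - 1 := by rw [abs_le]; omega
        rw [abs_mul] at h6
        linarith
      · have h5 : |t| * (s : ℤ) ≤ |t| * |d1| := by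
          apply mul_le_mul_of_nonneg_left _ (abs_nonneg t)
          rw [← Int.natCast_natAbs d1]
          exact_mod_cast hcase
        have h6 : |t * d1| = |q.1 - p.1| := by rw [← ht1']
        have h7 : |q.1 - p.1| ≤ (n : ℤ) - 1 := by rw [abs_le]; omega
        rw [abs_mul] at h6
        linarith
    refine ⟨t, ?_, ?_⟩
    · rw [Set.mem_Icc]
      constructor
      · linarith [neg_abs_le t]
      · linarith [le_abs_self t]
    · show ((q.1 - t * d1, q.2 - t * d2) : ℤ × ℤ) = p
      have e1 : (q.1 - t * d1 : ℤ) = p.1 := by linarith [ht1']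
      have e2 : (q.2 - t * d2 : ℤ) = p.2 := by linarith [ht2']
      rw [Prod.ext_iff]
      exact ⟨e1, e2⟩
  have hfinIcc : (Set.Icc (-T) T).Finite := Set.finite_Icc _ _
  have hfin : {p : ℤ × ℤ | inGrid n p ∧ Par (q - p) (b - a)}.Finite :=
    (hfinIcc.image _).subset hsub
  refine ⟨hfin, ?_⟩
  have hcard1 : {p : ℤ × ℤ | inGrid n p ∧ Par (q - p) (b - a)}.ncard ≤
      ((fun t : ℤ => ((q.1 - t * d1, q.2 - t * d2) : ℤ × ℤ)) '' (Set.Icc (-T) T)).ncard :=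
    Set.ncard_le_ncard hsub (hfinIcc.image _)
  have hcard2 : ((fun t : ℤ => ((q.1 - t * d1, q.2 - t * d2) : ℤ × ℤ)) '' (Set.Icc (-T) T)).ncard ≤
      (Set.Icc (-T) T).ncard := Set.ncard_image_le hfinIcc
  have hIcc : (Set.Icc (-T) T).ncard = (2 * T + 1).toNat := by
    have h1 : (Set.Icc (-T) T) = ((Finset.Icc (-T) T : Finset ℤ) : Set ℤ) := by simp
    rw [h1, Set.ncard_coe_finset, Int.card_Icc]
    congr 1
    ring
  have key : ({p : ℤ × ℤ | inGrid n p ∧ Par (q - p) (b - a)}.ncard : ℝ) ≤ 2 * (T : ℝ) + 1 := by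
    have := hcard1.trans hcard2
    rw [hIcc] at this
    have h2' : ((2 * T + 1).toNat : ℤ) = 2 * T + 1 := Int.toNat_of_nonneg (by omega)
    have h2 : ((2 * T + 1).toNat : ℝ) = 2 * (T : ℝ) + 1 := by exact_mod_cast h2'
    calc ({p : ℤ × ℤ | inGrid n p ∧ Par (q - p) (b - a)}.ncard : ℝ)
        ≤ ((2 * T + 1).toNat : ℝ) := by exact_mod_cast this
      _ = 2 * (T : ℝ) + 1 := h2
  refine key.trans ?_
  rw [div_eq_mul_inv, ← ge_iff_le, ge_iff_le, ← div_eq_mul_inv, le_div_iff₀ (by positivity)]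
  have hTsr : (T : ℝ) * (s : ℝ) ≤ (n : ℝ) - 1 := by exact_mod_cast hTs
  have hsnr : (s : ℝ) ≤ (n : ℝ) := by
    have : s ≤ n := by omega
    exact_mod_cast this
  nlinarith

lemma line_bound' (n s : ℕ) (q a b : ℤ × ℤ) (hs : 0 < s)
    (hq : inGrid n q) (ha : inGrid n a) (hb : inGrid n b) :
    {p : ℤ × ℤ | inGrid n p ∧ Par (q - p) (b - a) ∧ s ≤ HLine a b}.Finite ∧
    ({p : ℤ × ℤ | inGrid n p ∧ Par (q - p) (b - a) ∧ s ≤ HLine a b}.ncard : ℝ) ≤ 3 * n / s := by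
  by_cases hH : s ≤ HLine a b
  · obtain ⟨hfin, hbd⟩ := line_bound n s q a b hs hq ha hb hH
    have hsub : {p : ℤ × ℤ | inGrid n p ∧ Par (q - p) (b - a) ∧ s ≤ HLine a b} ⊆
        {p : ℤ × ℤ | inGrid n p ∧ Par (q - p) (b - a)} := by
      rintro p ⟨h1, h2, _⟩; exact ⟨h1, h2⟩
    refine ⟨hfin.subset hsub, ?_⟩
    calc ({p : ℤ × ℤ | inGrid n p ∧ Par (q - p) (b - a) ∧ s ≤ HLine a b}.ncard : ℝ)
        ≤ ({p : ℤ × ℤ | inGrid n p ∧ Par (q - p) (b - a)}.ncard : ℝ) := by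
          exact_mod_cast Set.ncard_le_ncard hsub hfin
      _ ≤ 3 * n / s := hbd
  · have he : {p : ℤ × ℤ | inGrid n p ∧ Par (q - p) (b - a) ∧ s ≤ HLine a b} = ∅ := by
      ext p; simp only [Set.mem_setOf_eq, Set.mem_empty_iff_false, iff_false]
      rintro ⟨_, _, h⟩; exact hH h
    rw [he]
    refine ⟨Set.finite_empty, ?_⟩
    simp only [Set.ncard_empty, Nat.cast_zero]
    positivity

/-- For three non-collinear grid points `p₁,p₂,p₃` and a positive integer `s*`, the number of
grid points `p` such that `{p,p₁,p₂,p₃}` is a trapezoid whose parallel sides lie on lines of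
`H`-value at least `s*` is at most `C·n/s*` for an absolute constant `C`. -/
theorem stmt3 :
    ∃ C : ℝ, 0 < C ∧ ∀ (n sstar : ℕ) (p₁ p₂ p₃ : ℤ × ℤ),
      0 < sstar →
      inGrid n p₁ → inGrid n p₂ → inGrid n p₃ →
      ¬Collin p₁ p₂ p₃ →
      (({p : ℤ × ℤ | inGrid n p ∧
          ((TrapPair p p₁ p₂ p₃ ∧ sstar ≤ HLine p p₁ ∧ sstar ≤ HLine p₂ p₃) ∨
           (TrapPair p p₂ p₁ p₃ ∧ sstar ≤ HLine p p₂ ∧ sstar ≤ HLine p₁ p₃) ∨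
           (TrapPair p p₃ p₁ p₂ ∧ sstar ≤ HLine p p₃ ∧ sstar ≤ HLine p₁ p₂))}.ncard : ℝ))
        ≤ C * n / sstar := by
  refine ⟨9, by norm_num, ?_⟩
  intro n s p₁ p₂ p₃ hs h1 h2 h3 _hcol
  set S1 : Set (ℤ × ℤ) := {p | inGrid n p ∧ Par (p₁ - p) (p₃ - p₂) ∧ s ≤ HLine p₂ p₃} with hS1
  set S2 : Set (ℤ × ℤ) := {p | inGrid n p ∧ Par (p₂ - p) (p₃ - p₁) ∧ s ≤ HLine p₁ p₃} with hS2
  set S3 : Set (ℤ × ℤ) := {p | inGrid n p ∧ Par (p₃ - p) (p₂ - p₁) ∧ s ≤ HLine p₁ p₂} with hS3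
  obtain ⟨hf1, hb1⟩ := line_bound' n s p₁ p₂ p₃ hs h1 h2 h3
  obtain ⟨hf2, hb2⟩ := line_bound' n s p₂ p₁ p₃ hs h2 h1 h3
  obtain ⟨hf3, hb3⟩ := line_bound' n s p₃ p₁ p₂ hs h3 h1 h2
  have hsub : {p : ℤ × ℤ | inGrid n p ∧
      ((TrapPair p p₁ p₂ p₃ ∧ s ≤ HLine p p₁ ∧ s ≤ HLine p₂ p₃) ∨
       (TrapPair p p₂ p₁ p₃ ∧ s ≤ HLine p p₂ ∧ s ≤ HLine p₁ p₃) ∨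
       (TrapPair p p₃ p₁ p₂ ∧ s ≤ HLine p p₃ ∧ s ≤ HLine p₁ p₂))} ⊆ S1 ∪ S2 ∪ S3 := by
    rintro p ⟨hp, hcase⟩
    rcases hcase with ⟨⟨_, hpar⟩, _, hh⟩ | ⟨⟨_, hpar⟩, _, hh⟩ | ⟨⟨_, hpar⟩, _, hh⟩
    · exact Or.inl (Or.inl ⟨hp, hpar, hh⟩)
    · exact Or.inl (Or.inr ⟨hp, hpar, hh⟩)
    · exact Or.inr ⟨hp, hpar, hh⟩
  have hfu : (S1 ∪ S2 ∪ S3).Finite := (hf1.union hf2).union hf3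
  have hc : ({p : ℤ × ℤ | inGrid n p ∧
      ((TrapPair p p₁ p₂ p₃ ∧ s ≤ HLine p p₁ ∧ s ≤ HLine p₂ p₃) ∨
       (TrapPair p p₂ p₁ p₃ ∧ s ≤ HLine p p₂ ∧ s ≤ HLine p₁ p₃) ∨
       (TrapPair p p₃ p₁ p₂ ∧ s ≤ HLine p p₃ ∧ s ≤ HLine p₁ p₂))}).ncard ≤
      S1.ncard + S2.ncard + S3.ncard := by
    calc _ ≤ (S1 ∪ S2 ∪ S3).ncard := Set.ncard_le_ncard hsub hfu
      _ ≤ (S1 ∪ S2).ncard + S3.ncard := Set.ncard_union_le _ _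
      _ ≤ S1.ncard + S2.ncard + S3.ncard := by
          gcongr
          exact Set.ncard_union_le _ _
  calc ({p : ℤ × ℤ | inGrid n p ∧
      ((TrapPair p p₁ p₂ p₃ ∧ s ≤ HLine p p₁ ∧ s ≤ HLine p₂ p₃) ∨
       (TrapPair p p₂ p₁ p₃ ∧ s ≤ HLine p p₂ ∧ s ≤ HLine p₁ p₃) ∨
       (TrapPair p p₃ p₁ p₂ ∧ s ≤ HLine p p₃ ∧ s ≤ HLine p₁ p₂))}.ncard : ℝ)
      ≤ (S1.ncard : ℝ) + S2.ncard + S3.ncard := by exact_mod_cast hc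
    _ ≤ 3 * n / s + 3 * n / s + 3 * n / s := by
        refine add_le_add (add_le_add hb1 hb2) hb3
    _ = 9 * n / s := by ring
end

section
/- For any point p ∈ [n]², the number of collinear triples of grid points in [n]² containing p is at most C·n² log n for an absolute constant C. -/
open Finset

-- primitive direction lemmas
lemma prim_spec {d : ℤ × ℤ} (hd : d ≠ 0) :
    ∃ v : ℤ × ℤ, d.1 = (Int.gcd d.1 d.2 : ℤ) * v.1 ∧ d.2 = (Int.gcd d.1 d.2 : ℤ) * v.2 ∧
      Int.gcd v.1 v.2 = 1 ∧ v = (d.1 / (Int.gcd d.1 d.2 : ℤ), d.2 / (Int.gcd d.1 d.2 : ℤ)) := by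
  have hg : 0 < Int.gcd d.1 d.2 := by
    rw [Int.gcd_pos_iff]
    by_contra hc
    push_neg at hc
    exact hd (Prod.ext hc.1 hc.2)
  refine ⟨_, ?_, ?_, Int.gcd_div_gcd_div_gcd hg, rfl⟩
  · exact (Int.mul_ediv_cancel' (Int.gcd_dvd_left _ _)).symm
  · exact (Int.mul_ediv_cancel' (Int.gcd_dvd_right _ _)).symm

lemma exists_mul_of_cross {v e : ℤ × ℤ} (hco : Int.gcd v.1 v.2 = 1)
    (hcross : v.1 * e.2 = v.2 * e.1) : ∃ b : ℤ, e.1 = b * v.1 ∧ e.2 = b * v.2 := by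
  by_cases hv1 : v.1 = 0
  · have h2 : v.2.natAbs = 1 := by simpa [hv1] using hco
    have : e.1 = 0 := by
      have hv2 : v.2 ≠ 0 := by omega
      have : v.2 * e.1 = 0 := by rw [← hcross, hv1, zero_mul]
      exact (mul_eq_zero.mp this).resolve_left hv2
    refine ⟨e.2 * v.2, by simp [hv1, this], ?_⟩
    have : v.2 = 1 ∨ v.2 = -1 := by omega
    rcases this with h | h <;> simp [h] <;> ring
  · have hdvd : v.1 ∣ v.2 * e.1 := ⟨e.2, hcross.symm⟩
    have hcop : IsCoprime v.1 v.2 := Int.isCoprime_iff_gcd_eq_one.mpr hco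
    have h1 : v.1 ∣ e.1 := hcop.dvd_of_dvd_mul_left hdvd
    obtain ⟨b, hb⟩ := h1
    refine ⟨b, by rw [hb, mul_comm], ?_⟩
    have : v.1 * e.2 = v.1 * (b * v.2) := by rw [hcross, hb]; ring
    exact mul_left_cancel₀ hv1 this

noncomputable def boxZ (n : ℕ) : Finset (ℤ × ℤ) := Finset.Icc (-(n:ℤ)) n ×ˢ Finset.Icc (-(n:ℤ)) n

noncomputable def Dn (n : ℕ) : Finset ((ℤ × ℤ) × (ℤ × ℤ)) :=
  (boxZ n ×ˢ boxZ n).filter fun de =>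
    de.1 ≠ 0 ∧ de.2 ≠ 0 ∧ de.1.1 * de.2.2 = de.1.2 * de.2.1

def sv (v : ℤ × ℤ) : ℕ := max v.1.natAbs v.2.natAbs

noncomputable def Mv (n : ℕ) (v : ℤ × ℤ) : Finset ℤ :=
  (Finset.Icc (-(n / sv v : ℕ) : ℤ) ((n / sv v : ℕ) : ℤ)).erase 0

noncomputable def Vn (n : ℕ) : Finset (ℤ × ℤ) := (boxZ n).filter (· ≠ 0)

lemma Mv_card (n : ℕ) (v : ℤ × ℤ) : (Mv n v).card = 2 * (n / sv v) := by
  rw [Mv]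
  generalize (n / sv v : ℕ) = k
  have h0 : (0:ℤ) ∈ Finset.Icc (-(k : ℤ)) (k : ℤ) := by
    simp only [Finset.mem_Icc]
    omega
  rw [Finset.card_erase_of_mem h0, Int.card_Icc]
  omega

lemma mem_Mv {n : ℕ} {v : ℤ × ℤ} {a : ℤ} (hv : v ≠ 0) (ha : a ≠ 0)
    (h1 : (a * v.1).natAbs ≤ n) (h2 : (a * v.2).natAbs ≤ n) : a ∈ Mv n v := by
  have hs : 0 < sv v := by
    rcases v with ⟨x, y⟩
    have hxy : x ≠ 0 ∨ y ≠ 0 := by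
      by_contra h
      push_neg at h
      exact hv (by simp [Prod.mk_eq_zero, h.1, h.2])
    simp only [sv]
    omega
  have hkey : a.natAbs * sv v ≤ n := by
    rw [Int.natAbs_mul] at h1 h2
    rcases le_total v.1.natAbs v.2.natAbs with h | h
    · rw [sv, max_eq_right h]; exact h2
    · rw [sv, max_eq_left h]; exact h1
  have hle : a.natAbs ≤ n / sv v := Nat.le_div_iff_mul_le hs |>.mpr hkey
  simp only [Mv, Finset.mem_erase, Finset.mem_Icc]
  generalize hk : (n / sv v : ℕ) = k at hle ⊢
  omega

lemma fiber_card (n : ℕ) (s : ℕ) (hs : 1 ≤ s) :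
    ((Vn n).filter (fun v => sv v = s)).card ≤ 8 * s := by
  have hsub : (Vn n).filter (fun v => sv v = s) ⊆
      (Finset.Icc (-(s:ℤ)) s ×ˢ Finset.Icc (-(s:ℤ)) s) \
      (Finset.Icc (-(s:ℤ)+1) ((s:ℤ)-1) ×ˢ Finset.Icc (-(s:ℤ)+1) ((s:ℤ)-1)) := by
    intro v hv
    rw [Vn, Finset.mem_filter] at hv
    obtain ⟨_, hsv⟩ := hv
    simp only [Finset.mem_sdiff, Finset.mem_product, Finset.mem_Icc]
    rw [sv] at hsv
    have h1 : v.1.natAbs ≤ s ∧ v.2.natAbs ≤ s ∧ (v.1.natAbs = s ∨ v.2.natAbs = s) := by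
      omega
    constructor
    · omega
    · intro hc
      omega
  refine (Finset.card_le_card hsub).trans ?_
  rw [Finset.card_sdiff_of_subset (by
    apply Finset.product_subset_product <;> apply Finset.Icc_subset_Icc <;> omega)]
  rw [Finset.card_product, Finset.card_product, Int.card_Icc, Int.card_Icc]
  have h1 : ((s:ℤ) + 1 - -(s:ℤ)).toNat = 2*s+1 := by omega
  have h2 : ((s:ℤ) - 1 + 1 - (-(s:ℤ)+1)).toNat = 2*s-1 := by omega
  rw [h1, h2]
  obtain ⟨t, rfl⟩ : ∃ t, s = t + 1 := ⟨s - 1, by omega⟩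
  have : (2*(t+1)+1) * (2*(t+1)+1) = (2*(t+1)-1) * (2*(t+1)-1) + 8*(t+1) := by
    have h3 : 2*(t+1)-1 = 2*t+1 := by omega
    rw [h3]; ring
  omega

noncomputable def En (n : ℕ) : Finset ((_ : ℤ × ℤ) × (ℤ × ℤ)) := (Vn n).sigma (fun v => Mv n v ×ˢ Mv n v)

lemma mem_boxZ {n : ℕ} {d : ℤ × ℤ} (h : d ∈ boxZ n) : d.1.natAbs ≤ n ∧ d.2.natAbs ≤ n := by
  rw [boxZ, Finset.mem_product, Finset.mem_Icc, Finset.mem_Icc] at h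
  omega

def pdir (d : ℤ × ℤ) : ℤ × ℤ :=
  (d.1 / (Int.gcd d.1 d.2 : ℤ), d.2 / (Int.gcd d.1 d.2 : ℤ))

def bof (v e : ℤ × ℤ) : ℤ := if v.1 = 0 then e.2 / v.2 else e.1 / v.1

def phi (de : (ℤ × ℤ) × (ℤ × ℤ)) : (_ : ℤ × ℤ) × (ℤ × ℤ) :=
  ⟨pdir de.1, ((Int.gcd de.1.1 de.1.2 : ℤ), bof (pdir de.1) de.2)⟩

lemma prodZ_eq_zero {x y : ℤ} : (x, y) = (0 : ℤ × ℤ) ↔ x = 0 ∧ y = 0 := by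
  constructor
  · intro h
    exact ⟨congrArg Prod.fst h, congrArg Prod.snd h⟩
  · rintro ⟨rfl, rfl⟩
    rfl

lemma pdir_spec {d : ℤ × ℤ} (hd : d ≠ 0) :
    d.1 = (Int.gcd d.1 d.2 : ℤ) * (pdir d).1 ∧ d.2 = (Int.gcd d.1 d.2 : ℤ) * (pdir d).2 ∧
      Int.gcd (pdir d).1 (pdir d).2 = 1 := by
  obtain ⟨v, h1, h2, h3, h4⟩ := prim_spec hd
  have : pdir d = v := by rw [pdir, h4]
  rw [this]
  exact ⟨h1, h2, h3⟩

lemma bof_spec {v e : ℤ × ℤ} (hv : v ≠ 0) {b₀ : ℤ}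
    (h1 : e.1 = b₀ * v.1) (h2 : e.2 = b₀ * v.2) : bof v e = b₀ := by
  by_cases hv1 : v.1 = 0
  · have hv2 : v.2 ≠ 0 := by
      intro h
      exact hv (by rw [Prod.ext_iff]; exact ⟨hv1, h⟩)
    rw [bof, if_pos hv1, h2, Int.mul_ediv_cancel _ hv2]
  · rw [bof, if_neg hv1, h1, Int.mul_ediv_cancel _ hv1]

lemma phi_spec {n : ℕ} {de : (ℤ × ℤ) × (ℤ × ℤ)} (hde : de ∈ Dn n) :
    phi de ∈ En n ∧
    de.1.1 = (phi de).2.1 * (phi de).1.1 ∧ de.1.2 = (phi de).2.1 * (phi de).1.2 ∧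
    de.2.1 = (phi de).2.2 * (phi de).1.1 ∧ de.2.2 = (phi de).2.2 * (phi de).1.2 := by
  rw [Dn, Finset.mem_filter, Finset.mem_product] at hde
  obtain ⟨⟨hdbox, hebox⟩, hd0, he0, hcross⟩ := hde
  obtain ⟨hv1, hv2, hvcop⟩ := pdir_spec hd0
  set v : ℤ × ℤ := pdir de.1 with hvdef
  set g : ℤ := (Int.gcd de.1.1 de.1.2 : ℤ) with hgdef
  have hg1 : 1 ≤ g := by
    have : Int.gcd de.1.1 de.1.2 ≠ 0 := by
      rw [Ne, Int.gcd_eq_zero_iff]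
      intro ⟨h1, h2⟩
      exact hd0 (by rw [Prod.ext_iff]; exact ⟨h1, h2⟩)
    omega
  have hvne : v ≠ 0 := by
    intro h
    apply hd0
    have e1 : v.1 = 0 := by rw [h]; rfl
    have e2 : v.2 = 0 := by rw [h]; rfl
    rw [e1, mul_zero] at hv1
    rw [e2, mul_zero] at hv2
    rw [Prod.ext_iff]
    exact ⟨hv1, hv2⟩
  have hcrossv : v.1 * de.2.2 = v.2 * de.2.1 := by
    have : g * (v.1 * de.2.2) = g * (v.2 * de.2.1) := by
      rw [← mul_assoc, ← mul_assoc, ← hv1, ← hv2]; exact hcross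
    exact mul_left_cancel₀ (by omega) this
  obtain ⟨b₀, hb1, hb2⟩ := exists_mul_of_cross hvcop hcrossv
  have hb : bof v de.2 = b₀ := bof_spec hvne hb1 hb2
  have hphi1 : (phi de).1 = v := rfl
  have hphi2 : (phi de).2.1 = g := rfl
  have hphi3 : (phi de).2.2 = b₀ := hb
  have hb0 : b₀ ≠ 0 := by
    intro h
    apply he0
    rw [h, zero_mul] at hb1 hb2
    rw [Prod.ext_iff]
    exact ⟨hb1, hb2⟩
  have hdb := mem_boxZ hdbox
  have heb := mem_boxZ hebox
  refine ⟨?_, ?_, ?_, ?_, ?_⟩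
  · rw [En, Finset.mem_sigma, Finset.mem_product, hphi1, hphi2, hphi3]
    refine ⟨?_, ?_, ?_⟩
    · -- v ∈ Vn n
      rw [Vn, Finset.mem_filter]
      refine ⟨?_, hvne⟩
      rw [boxZ, Finset.mem_product, Finset.mem_Icc, Finset.mem_Icc]
      have n1 : de.1.1.natAbs = g.natAbs * v.1.natAbs := by rw [hv1, Int.natAbs_mul]
      have n2 : de.1.2.natAbs = g.natAbs * v.2.natAbs := by rw [hv2, Int.natAbs_mul]
      have l1 : v.1.natAbs ≤ g.natAbs * v.1.natAbs := Nat.le_mul_of_pos_left _ (by omega)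
      have l2 : v.2.natAbs ≤ g.natAbs * v.2.natAbs := Nat.le_mul_of_pos_left _ (by omega)
      omega
    · exact mem_Mv hvne (by omega) (by rw [← hv1]; exact hdb.1) (by rw [← hv2]; exact hdb.2)
    · exact mem_Mv hvne hb0 (by rw [← hb1]; exact heb.1) (by rw [← hb2]; exact heb.2)
  · rw [hphi1, hphi2]; exact hv1
  · rw [hphi1, hphi2]; exact hv2
  · rw [hphi1, hphi3]; exact hb1
  · rw [hphi1, hphi3]; exact hb2

lemma Dn_card_le_En (n : ℕ) : (Dn n).card ≤ (En n).card := by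
  apply Finset.card_le_card_of_injOn phi (fun de hde => (phi_spec hde).1)
  intro x hx y hy hxy
  obtain ⟨-, hx1, hx2, hx3, hx4⟩ := phi_spec (Finset.mem_coe.mp hx)
  obtain ⟨-, hy1, hy2, hy3, hy4⟩ := phi_spec (Finset.mem_coe.mp hy)
  rw [hxy] at hx1 hx2 hx3 hx4
  have e1 : x.1.1 = y.1.1 := by rw [hx1, hy1]
  have e2 : x.1.2 = y.1.2 := by rw [hx2, hy2]
  have e3 : x.2.1 = y.2.1 := by rw [hx3, hy3]
  have e4 : x.2.2 = y.2.2 := by rw [hx4, hy4]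
  exact Prod.ext (Prod.ext e1 e2) (Prod.ext e3 e4)

lemma En_card (n : ℕ) : (En n).card = ∑ v ∈ Vn n, (2 * (n / sv v)) * (2 * (n / sv v)) := by
  rw [En, Finset.card_sigma]
  refine Finset.sum_congr rfl fun v _ => ?_
  rw [Finset.card_product, Mv_card]

lemma sv_mem {n : ℕ} {v : ℤ × ℤ} (hv : v ∈ Vn n) : sv v ∈ Finset.Icc 1 n := by
  rw [Vn, Finset.mem_filter] at hv
  obtain ⟨hb, hv0⟩ := hv
  have hbb := mem_boxZ hb
  have h1 : v.1 ≠ 0 ∨ v.2 ≠ 0 := by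
    by_contra h
    push_neg at h
    exact hv0 (by rw [Prod.ext_iff]; exact ⟨h.1, h.2⟩)
  rw [Finset.mem_Icc, sv]
  omega

lemma Dn_card_bound (n : ℕ) : ((Dn n).card : ℝ) ≤ 32 * n ^ 2 * (1 + Real.log n) := by
  have step1 : ((Dn n).card : ℝ) ≤
      ∑ v ∈ Vn n, (((2 * (n / sv v)) * (2 * (n / sv v)) : ℕ) : ℝ) := by
    rw [← Nat.cast_sum]
    exact_mod_cast (Dn_card_le_En n).trans_eq (En_card n)
  have step2 : ∑ v ∈ Vn n, (((2 * (n / sv v)) * (2 * (n / sv v)) : ℕ) : ℝ)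
      = ∑ s ∈ Finset.Icc 1 n, ∑ v ∈ (Vn n).filter (fun v => sv v = s),
          (((2 * (n / sv v)) * (2 * (n / sv v)) : ℕ) : ℝ) :=
    (Finset.sum_fiberwise_of_maps_to (fun v hv => sv_mem hv) _).symm
  have step3 : ∀ s ∈ Finset.Icc 1 n,
      ∑ v ∈ (Vn n).filter (fun v => sv v = s),
          (((2 * (n / sv v)) * (2 * (n / sv v)) : ℕ) : ℝ)
        ≤ (8 * s : ℝ) * ((2 * n / s) * (2 * n / s)) := by
    intro s hs
    rw [Finset.mem_Icc] at hs
    have hs0 : (0:ℝ) < s := by exact_mod_cast hs.1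
    have hterm : ∀ v ∈ (Vn n).filter (fun v => sv v = s),
        (((2 * (n / sv v)) * (2 * (n / sv v)) : ℕ) : ℝ) ≤ (2 * n / s) * (2 * n / s) := by
      intro v hv
      have hsv : sv v = s := (Finset.mem_filter.mp hv).2
      rw [hsv]
      have hdle : ((n / s : ℕ) : ℝ) ≤ (n : ℝ) / s := Nat.cast_div_le
      have hd0 : (0:ℝ) ≤ ((n / s : ℕ) : ℝ) := Nat.cast_nonneg _
      push_cast
      have h2 : (2:ℝ) * ((n / s : ℕ) : ℝ) ≤ 2 * n / s := by
        rw [mul_div_assoc]; linarith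
      nlinarith
    calc ∑ v ∈ (Vn n).filter (fun v => sv v = s),
          (((2 * (n / sv v)) * (2 * (n / sv v)) : ℕ) : ℝ)
        ≤ ((Vn n).filter (fun v => sv v = s)).card • ((2 * n / s) * (2 * n / s) : ℝ) :=
          Finset.sum_le_card_nsmul _ _ _ hterm
      _ = (((Vn n).filter (fun v => sv v = s)).card : ℝ) * ((2 * n / s) * (2 * n / s)) := by
          rw [nsmul_eq_mul]
      _ ≤ (8 * s : ℝ) * ((2 * n / s) * (2 * n / s)) := by
          apply mul_le_mul_of_nonneg_right
          · exact_mod_cast fiber_card n s hs.1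
          · positivity
  have step4 : ∑ s ∈ Finset.Icc 1 n, (8 * s : ℝ) * ((2 * n / s) * (2 * n / s))
      = 32 * n ^ 2 * ∑ s ∈ Finset.Icc 1 n, ((s : ℝ))⁻¹ := by
    rw [Finset.mul_sum]
    refine Finset.sum_congr rfl fun s hs => ?_
    rw [Finset.mem_Icc] at hs
    have hs0 : (s:ℝ) ≠ 0 := by
      have : (0:ℝ) < s := by exact_mod_cast hs.1
      linarith
    field_simp
    ring
  have step5 : ∑ s ∈ Finset.Icc 1 n, ((s : ℝ))⁻¹ ≤ 1 + Real.log n := by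
    have h := harmonic_le_one_add_log n
    rw [harmonic_eq_sum_Icc] at h
    push_cast at h
    exact h
  calc ((Dn n).card : ℝ)
      ≤ ∑ s ∈ Finset.Icc 1 n, ∑ v ∈ (Vn n).filter (fun v => sv v = s),
          (((2 * (n / sv v)) * (2 * (n / sv v)) : ℕ) : ℝ) := step1.trans_eq step2
    _ ≤ ∑ s ∈ Finset.Icc 1 n, (8 * s : ℝ) * ((2 * n / s) * (2 * n / s)) :=
        Finset.sum_le_sum step3
    _ = 32 * n ^ 2 * ∑ s ∈ Finset.Icc 1 n, ((s : ℝ))⁻¹ := step4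
    _ ≤ 32 * n ^ 2 * (1 + Real.log n) := by
        apply mul_le_mul_of_nonneg_left step5
        positivity

/-- For any point `p ∈ [n]²`, the number of collinear triples of grid points containing `p`
is at most `C·n²·log n` for an absolute constant `C`. -/
theorem stmt5 :
    ∃ C : ℝ, 0 < C ∧ ∀ (n : ℕ) (p : ℤ × ℤ), inGrid n p →
      (({T : Finset (ℤ × ℤ) | p ∈ T ∧ (∀ q ∈ T, inGrid n q) ∧
          ∃ q r : ℤ × ℤ, T = {p, q, r} ∧ p ≠ q ∧ p ≠ r ∧ q ≠ r ∧
            Collin p q r}.ncard : ℝ))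
        ≤ C * n ^ 2 * Real.log n := by
  refine ⟨96, by norm_num, ?_⟩
  intro n p hp
  set S := {T : Finset (ℤ × ℤ) | p ∈ T ∧ (∀ q ∈ T, inGrid n q) ∧
      ∃ q r : ℤ × ℤ, T = {p, q, r} ∧ p ≠ q ∧ p ≠ r ∧ q ≠ r ∧ Collin p q r} with hS
  have hn1 : 1 ≤ n := by
    obtain ⟨h1, h2, -, -⟩ := hp
    by_contra h
    push_neg at h
    interval_cases n
    simp only [Nat.cast_zero] at h2
    omega
  have hsub : S ⊆ (fun de : (ℤ × ℤ) × (ℤ × ℤ) =>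
      ({p, p + de.1, p + de.2} : Finset (ℤ × ℤ))) '' ↑(Dn n) := by
    rintro T ⟨hpT, hgrid, q, r, hT, hpq, hpr, hqr, hcol⟩
    refine ⟨(q - p, r - p), ?_, ?_⟩
    · rw [Finset.mem_coe, Dn, Finset.mem_filter, Finset.mem_product]
      have hq : inGrid n q := hgrid q (by rw [hT]; simp)
      have hr : inGrid n r := hgrid r (by rw [hT]; simp)
      obtain ⟨hp1, hp2, hp3, hp4⟩ := hp
      obtain ⟨hq1, hq2, hq3, hq4⟩ := hq
      obtain ⟨hr1, hr2, hr3, hr4⟩ := hr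
      refine ⟨⟨?_, ?_⟩, ?_, ?_, ?_⟩
      · rw [boxZ, Finset.mem_product, Finset.mem_Icc, Finset.mem_Icc]
        simp only [Prod.fst_sub, Prod.snd_sub]
        omega
      · rw [boxZ, Finset.mem_product, Finset.mem_Icc, Finset.mem_Icc]
        simp only [Prod.fst_sub, Prod.snd_sub]
        omega
      · exact sub_ne_zero.mpr hpq.symm
      · exact sub_ne_zero.mpr hpr.symm
      · simp only [Prod.fst_sub, Prod.snd_sub]
        exact hcol
    · simp only
      rw [show p + ((q - p, r - p) : (ℤ × ℤ) × (ℤ × ℤ)).1 = q from by simp,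
        show p + ((q - p, r - p) : (ℤ × ℤ) × (ℤ × ℤ)).2 = r from by simp, hT]
  have h1 : S.ncard ≤ (Dn n).card := by
    calc S.ncard ≤ ((fun de : (ℤ × ℤ) × (ℤ × ℤ) =>
          ({p, p + de.1, p + de.2} : Finset (ℤ × ℤ))) '' ↑(Dn n)).ncard :=
          Set.ncard_le_ncard hsub (((Dn n).finite_toSet).image _)
      _ ≤ (↑(Dn n) : Set ((ℤ × ℤ) × (ℤ × ℤ))).ncard :=
          Set.ncard_image_le (Dn n).finite_toSet
      _ = (Dn n).card := Set.ncard_coe_finset _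
  rcases eq_or_lt_of_le hn1 with hn | hn
  · -- n = 1 : S is empty
    have hSempty : S = ∅ := by
      rw [Set.eq_empty_iff_forall_notMem]
      rintro T ⟨hpT, hgrid, q, r, hT, hpq, hpr, hqr, hcol⟩
      have hq : inGrid n q := hgrid q (by rw [hT]; simp)
      obtain ⟨hp1, hp2, hp3, hp4⟩ := hp
      obtain ⟨hq1, hq2, hq3, hq4⟩ := hq
      rw [← hn] at hp2 hp4 hq2 hq4
      apply hpq
      rw [Prod.ext_iff]
      constructor <;> simp only [Nat.cast_one] at * <;> omega
    rw [hSempty]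
    simp only [Set.ncard_empty, Nat.cast_zero]
    rw [← hn]
    simp
  · -- n ≥ 2
    have hn2 : 2 ≤ n := hn
    have hcast : (2:ℝ) ≤ (n:ℝ) := by exact_mod_cast hn2
    have hlog2 : Real.log 2 ≤ Real.log n := Real.log_le_log (by norm_num) hcast
    have hl2 : (0.6931471803 : ℝ) < Real.log 2 := Real.log_two_gt_d9
    have hkey : 1 + Real.log n ≤ 3 * Real.log n := by linarith
    calc (S.ncard : ℝ) ≤ ((Dn n).card : ℝ) := by exact_mod_cast h1
      _ ≤ 32 * n ^ 2 * (1 + Real.log n) := Dn_card_bound n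
      _ ≤ 32 * n ^ 2 * (3 * Real.log n) := by
          apply mul_le_mul_of_nonneg_left hkey
          positivity
      _ = 96 * n ^ 2 * Real.log n := by ring
end

section
/- For any point p ∈ [n]², the number of trapezoids (4-element subsets of [n]² with two parallel sides through disjoint pairs) containing p is at most C·n⁴ log n for an absolute constant C. -/
/-- Four points form a trapezoid: distinct, no three collinear, and the line through one
pair is parallel to the line through the complementary pair. -/
def IsTrapezoid (a b c d : ℤ × ℤ) : Prop :=
  a ≠ b ∧ a ≠ c ∧ a ≠ d ∧ b ≠ c ∧ b ≠ d ∧ c ≠ d ∧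
  NoThreeCollin a b c d ∧
  (Par (b - a) (d - c) ∨ Par (c - a) (d - b) ∨ Par (d - a) (c - b))

namespace Stmt7Aux

/-- "norm" of a vector: max of absolute values of coordinates. -/
def mm (e : ℤ × ℤ) : ℤ := max |e.1| |e.2|

lemma mm_nonneg (e : ℤ × ℤ) : 0 ≤ mm e := le_trans (abs_nonneg _) (le_max_left _ _)

lemma mm_pos {e : ℤ × ℤ} (he : e ≠ 0) : 1 ≤ mm e := by
  rcases (by by_contra hc; push_neg at hc; exact he (Prod.ext hc.1 hc.2) : e.1 ≠ 0 ∨ e.2 ≠ 0) with h | h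
  · exact le_trans (Int.one_le_abs h) (le_max_left _ _)
  · exact le_trans (Int.one_le_abs h) (le_max_right _ _)

lemma mm_mul (t : ℤ) (e : ℤ × ℤ) : mm (t * e.1, t * e.2) = |t| * mm e := by
  simp [mm, abs_mul, mul_max_of_nonneg _ _ (abs_nonneg t)]

/-- decompose a pair of parallel vectors over a common direction -/
lemma par_decomp {u v : ℤ × ℤ} (hu : u ≠ 0) (h : u.1 * v.2 = u.2 * v.1) :
    ∃ (e : ℤ × ℤ) (s k : ℤ), u = (s * e.1, s * e.2) ∧ v = (k * e.1, k * e.2) ∧ e ≠ 0 := by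
  have hgnat : Int.gcd u.1 u.2 ≠ 0 := by
    intro h0
    rw [Int.gcd_eq_zero_iff] at h0
    exact hu (Prod.ext_iff.mpr h0)
  set g : ℤ := (Int.gcd u.1 u.2 : ℤ) with hgdef
  have hg : g ≠ 0 := by
    simp only [hgdef, ne_eq, Int.natCast_eq_zero]
    exact hgnat
  set e : ℤ × ℤ := (u.1 / g, u.2 / g) with hedef
  have h1 : g * e.1 = u.1 := Int.mul_ediv_cancel' (Int.gcd_dvd_left _ _)
  have h2 : g * e.2 = u.2 := Int.mul_ediv_cancel' (Int.gcd_dvd_right _ _)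
  have hene : e ≠ 0 := by
    intro h0
    apply hu
    have e1 : e.1 = 0 := by rw [h0]; rfl
    have e2 : e.2 = 0 := by rw [h0]; rfl
    have hu1 : u.1 = 0 := by rw [← h1, e1, mul_zero]
    have hu2 : u.2 = 0 := by rw [← h2, e2, mul_zero]
    exact Prod.ext_iff.mpr ⟨hu1, hu2⟩
  have hcop : IsCoprime e.1 e.2 := by
    rw [Int.isCoprime_iff_gcd_eq_one]
    exact Int.gcd_div_gcd_div_gcd (Nat.pos_of_ne_zero hgnat)
  have hpar' : e.1 * v.2 = e.2 * v.1 := by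
    apply mul_left_cancel₀ hg
    calc g * (e.1 * v.2) = (g * e.1) * v.2 := by ring
      _ = (g * e.2) * v.1 := by rw [h1, h2]; exact h
      _ = g * (e.2 * v.1) := by ring
  by_cases he1 : e.1 = 0
  · have he2 : e.2 ≠ 0 := by
      intro he2; exact hene (Prod.ext_iff.mpr ⟨he1, he2⟩)
    have hv1 : v.1 = 0 := by
      have h0 : e.2 * v.1 = 0 := by rw [← hpar', he1, zero_mul]
      exact (mul_eq_zero.mp h0).resolve_left he2
    have hsq : e.2 * e.2 = 1 := by
      have hgcd1 : Int.gcd e.1 e.2 = 1 := Int.isCoprime_iff_gcd_eq_one.mp hcop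
      rw [he1, Int.gcd, Int.natAbs_zero, Nat.gcd_zero_left] at hgcd1
      have : e.2 = 1 ∨ e.2 = -1 := Int.natAbs_eq_iff.mp hgcd1 |>.imp id id
      rcases this with h' | h' <;> rw [h'] <;> ring
    refine ⟨e, g, v.2 * e.2, ?_, ?_, hene⟩
    · exact Prod.ext_iff.mpr ⟨by rw [← h1], by rw [← h2]⟩
    · refine Prod.ext_iff.mpr ⟨?_, ?_⟩
      · show v.1 = v.2 * e.2 * e.1
        rw [hv1, he1, mul_zero]
      · show v.2 = v.2 * e.2 * e.2
        rw [mul_assoc, hsq, mul_one]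
  · have hdvd : e.1 ∣ v.1 := by
      refine hcop.dvd_of_dvd_mul_right ⟨v.2, ?_⟩
      rw [mul_comm] at hpar'
      linarith [hpar']
    obtain ⟨k, hk⟩ := hdvd
    have hv2 : v.2 = k * e.2 := by
      apply mul_left_cancel₀ he1
      rw [hpar', hk]; ring
    refine ⟨e, g, k, ?_, ?_, hene⟩
    · exact Prod.ext_iff.mpr ⟨by rw [← h1], by rw [← h2]⟩
    · exact Prod.ext_iff.mpr ⟨by rw [hk, mul_comm], by rw [hv2]⟩


noncomputable def grid (n : ℕ) : Finset (ℤ × ℤ) := Finset.Icc (1, 1) ((n : ℤ), (n : ℤ))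

noncomputable def box (n : ℕ) : Finset (ℤ × ℤ) := Finset.Icc (-(n:ℤ), -(n:ℤ)) ((n:ℤ), (n:ℤ))

noncomputable def W (n : ℕ) : Finset ((_ : ℤ × ℤ) × ℤ × ℤ × (ℤ × ℤ)) :=
  (box n \ {(0,0)}).sigma fun e =>
    Finset.Icc (-((n:ℤ) / mm e)) ((n:ℤ) / mm e) ×ˢ
      Finset.Icc (-((n:ℤ) / mm e)) ((n:ℤ) / mm e) ×ˢ grid n

def R (p : ℤ × ℤ) (x : (_ : ℤ × ℤ) × ℤ × ℤ × (ℤ × ℤ)) : Finset (ℤ × ℤ) :=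
  {p, (p.1 + x.2.1 * x.1.1, p.2 + x.2.1 * x.1.2), x.2.2.2,
   (x.2.2.2.1 + x.2.2.1 * x.1.1, x.2.2.2.2 + x.2.2.1 * x.1.2)}

lemma mem_grid {n : ℕ} {q : ℤ × ℤ} : q ∈ grid n ↔ inGrid n q := by
  simp only [grid, Finset.mem_Icc, Prod.le_def, inGrid]
  tauto

lemma mm_sub_le {n : ℕ} {x y : ℤ × ℤ} (hx : inGrid n x) (hy : inGrid n y) :
    mm (x - y) ≤ n := by
  obtain ⟨hx1, hx2, hx3, hx4⟩ := hx
  obtain ⟨hy1, hy2, hy3, hy4⟩ := hy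
  have h1 : (x - y).1 = x.1 - y.1 := rfl
  have h2 : (x - y).2 = x.2 - y.2 := rfl
  refine max_le ?_ ?_
  · rw [h1, abs_le]; omega
  · rw [h2, abs_le]; omega

lemma exists_rep {n : ℕ} {p a b c : ℤ × ℤ} (hp : inGrid n p) (ha : inGrid n a)
    (hb : inGrid n b) (hc : inGrid n c) (hap : a ≠ p) (hpar : Par (a - p) (c - b)) :
    ∃ x ∈ W n, ({p, a, b, c} : Finset (ℤ × ℤ)) = R p x := by
  have hu : a - p ≠ 0 := sub_ne_zero.mpr hap
  obtain ⟨e, s, k, hse, hke, hene⟩ := par_decomp hu hpar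
  have hmpos : 0 < mm e := mm_pos hene
  have hae : a.1 - p.1 = s * e.1 ∧ a.2 - p.2 = s * e.2 := by
    constructor
    · have := congrArg Prod.fst hse; simpa using this
    · have := congrArg Prod.snd hse; simpa using this
  have hce : c.1 - b.1 = k * e.1 ∧ c.2 - b.2 = k * e.2 := by
    constructor
    · have := congrArg Prod.fst hke; simpa using this
    · have := congrArg Prod.snd hke; simpa using this
  have hsne : s ≠ 0 := by
    intro h0
    apply hu
    rw [hse, h0]
    simp [Prod.ext_iff]
  have hsabs : 1 ≤ |s| := Int.one_le_abs hsne
  -- |s| * mm e ≤ n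
  have hsm : |s| * mm e ≤ n := by
    have : mm (a - p) ≤ n := mm_sub_le ha hp
    rw [hse] at this
    rwa [mm_mul] at this
  have hkm : |k| * mm e ≤ n := by
    have : mm (c - b) ≤ n := mm_sub_le hc hb
    rw [hke] at this
    rwa [mm_mul] at this
  have hsB : |s| ≤ (n:ℤ) / mm e := (Int.le_ediv_iff_mul_le hmpos).mpr hsm
  have hkB : |k| ≤ (n:ℤ) / mm e := (Int.le_ediv_iff_mul_le hmpos).mpr hkm
  have hebox : e ∈ box n \ {((0:ℤ),(0:ℤ))} := by
    rw [Finset.mem_sdiff]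
    constructor
    · rw [box, Finset.mem_Icc, Prod.le_def, Prod.le_def]
      have he1 : |e.1| ≤ mm e := le_max_left _ _
      have he2 : |e.2| ≤ mm e := le_max_right _ _
      have hmn : mm e ≤ n := le_trans (le_mul_of_one_le_left (le_of_lt hmpos) hsabs) hsm
      have h1 := abs_le.mp (le_trans (le_max_left |e.1| |e.2|) hmn)
      have h2 := abs_le.mp (le_trans (le_max_right |e.1| |e.2|) hmn)
      exact ⟨⟨h1.1, h2.1⟩, ⟨h1.2, h2.2⟩⟩
    · simp only [Finset.mem_singleton]
      intro h0
      exact hene (by rw [h0]; rfl)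
  refine ⟨⟨e, s, k, b⟩, ?_, ?_⟩
  · rw [W, Finset.mem_sigma]
    refine ⟨hebox, ?_⟩
    rw [Finset.mem_product, Finset.mem_product]
    refine ⟨Finset.mem_Icc.mpr ⟨?_, ?_⟩, Finset.mem_Icc.mpr ⟨?_, ?_⟩, mem_grid.mpr hb⟩
    · linarith [neg_abs_le s]
    · linarith [le_abs_self s]
    · linarith [neg_abs_le k]
    · linarith [le_abs_self k]
  · have hA : a = (p.1 + s * e.1, p.2 + s * e.2) := by
      refine Prod.ext_iff.mpr ⟨?_, ?_⟩ <;> simp <;> omega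
    have hC : c = (b.1 + k * e.1, b.2 + k * e.2) := by
      refine Prod.ext_iff.mpr ⟨?_, ?_⟩ <;> simp <;> omega
    rw [hA, hC]
    rfl

lemma card_box (t : ℕ) : (box t).card = (2*t+1) * (2*t+1) := by
  rw [box, Finset.card_Icc_prod]
  simp only [Int.card_Icc]
  have : ((t:ℤ) + 1 - -(t:ℤ)).toNat = 2*t+1 := by omega
  rw [this]

lemma card_grid (n : ℕ) : (grid n).card = n * n := by
  rw [grid, Finset.card_Icc_prod]
  simp only [Int.card_Icc]
  have : ((n:ℤ) + 1 - 1).toNat = n := by omega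
  rw [this]

lemma card_sphere_le {n : ℕ} (j : ℕ) (hj : 1 ≤ j) :
    ((box n \ {((0:ℤ),(0:ℤ))}).filter (fun e => (mm e).toNat = j)).card ≤ 8 * j := by
  have hsub : (box n \ {((0:ℤ),(0:ℤ))}).filter (fun e => (mm e).toNat = j)
      ⊆ box j \ box (j-1) := by
    intro e he
    simp only [Finset.mem_filter, Finset.mem_sdiff] at he
    obtain ⟨⟨_, hne⟩, hmj⟩ := he
    have hene : e ≠ (0,0) := by simpa using hne
    have hmpos : 1 ≤ mm e := mm_pos (by simpa [Prod.ext_iff] using hene)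
    have hmeq : mm e = (j:ℤ) := by omega
    rw [Finset.mem_sdiff]
    constructor
    · rw [box, Finset.mem_Icc, Prod.le_def, Prod.le_def]
      have h1 := abs_le.mp (le_of_eq_of_le (rfl) (le_of_le_of_eq (le_max_left |e.1| |e.2|) hmeq))
      have h2 := abs_le.mp (le_of_le_of_eq (le_max_right |e.1| |e.2|) hmeq)
      exact ⟨⟨h1.1, h2.1⟩, ⟨h1.2, h2.2⟩⟩
    · rw [box, Finset.mem_Icc, Prod.le_def, Prod.le_def]
      intro hcon
      obtain ⟨⟨c1, c2⟩, ⟨c3, c4⟩⟩ := hcon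
      have : max |e.1| |e.2| ≤ ((j:ℤ) - 1) := by
        push_cast
        refine max_le (abs_le.mpr ⟨?_, ?_⟩) (abs_le.mpr ⟨?_, ?_⟩) <;> push_cast at c1 c2 c3 c4 ⊢ <;> omega
      rw [show mm e = max |e.1| |e.2| from rfl] at hmeq
      omega
  calc ((box n \ {((0:ℤ),(0:ℤ))}).filter (fun e => (mm e).toNat = j)).card
      ≤ (box j \ box (j-1)).card := Finset.card_le_card hsub
    _ ≤ 8 * j := by
        have hss : box (j-1) ⊆ box j := by
          rw [box, box]
          apply Finset.Icc_subset_Icc <;> rw [Prod.le_def] <;> constructor <;> simp <;> omega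
        rw [Finset.card_sdiff_of_subset hss, card_box, card_box]
        obtain ⟨i, rfl⟩ : ∃ i, j = i+1 := ⟨j-1, by omega⟩
        have h0 : i + 1 - 1 = i := rfl
        have key : (2*(i+1)+1)*(2*(i+1)+1) = (2*i+1)*(2*i+1) + 8*(i+1) := by ring
        rw [h0, key]
        generalize (2*i+1)*(2*i+1) = B
        omega

lemma sum_inv_mm_sq (n : ℕ) :
    ∑ e ∈ (box n \ {((0:ℤ),(0:ℤ))}), (1:ℝ) / (mm e : ℝ)^2 ≤ 8 * (1 + Real.log n) := by
  have hmaps : ∀ e ∈ box n \ {((0:ℤ),(0:ℤ))}, (mm e).toNat ∈ Finset.Icc 1 n := by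
    intro e he
    rw [Finset.mem_sdiff] at he
    have hene : e ≠ 0 := by
      intro h0
      apply he.2
      rw [h0]
      simp
      rfl
    have h1 := mm_pos hene
    have h2 : mm e ≤ n := by
      have hb := he.1
      rw [box, Finset.mem_Icc, Prod.le_def, Prod.le_def] at hb
      exact max_le (abs_le.mpr ⟨hb.1.1, hb.2.1⟩) (abs_le.mpr ⟨hb.1.2, hb.2.2⟩)
    rw [Finset.mem_Icc]
    omega
  rw [← Finset.sum_fiberwise_of_maps_to hmaps]
  have step : ∀ j ∈ Finset.Icc 1 n,
      (∑ e ∈ (box n \ {((0:ℤ),(0:ℤ))}).filter (fun e => (mm e).toNat = j),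
        (1:ℝ)/(mm e:ℝ)^2) ≤ 8 / (j:ℝ) := by
    intro j hj
    rw [Finset.mem_Icc] at hj
    have hj1 : 1 ≤ j := hj.1
    have hconst : ∀ e ∈ (box n \ {((0:ℤ),(0:ℤ))}).filter (fun e => (mm e).toNat = j),
        (1:ℝ)/(mm e:ℝ)^2 = 1/(j:ℝ)^2 := by
      intro e he
      rw [Finset.mem_filter] at he
      have hnn := mm_nonneg e
      have : mm e = (j:ℤ) := by omega
      rw [this]
      norm_num
    rw [Finset.sum_congr rfl hconst, Finset.sum_const, nsmul_eq_mul]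
    have hcard := card_sphere_le (n := n) j hj1
    have hjR : (0:ℝ) < (j:ℝ) := by positivity
    calc (((box n \ {((0:ℤ),(0:ℤ))}).filter (fun e => (mm e).toNat = j)).card : ℝ)
          * (1/(j:ℝ)^2)
        ≤ ((8*j : ℕ) : ℝ) * (1/(j:ℝ)^2) := by
          apply mul_le_mul_of_nonneg_right _ (by positivity)
          exact_mod_cast hcard
      _ = 8 / (j:ℝ) := by
          push_cast
          field_simp
  calc ∑ j ∈ Finset.Icc 1 n, (∑ e ∈ (box n \ {((0:ℤ),(0:ℤ))}).filter
          (fun e => (mm e).toNat = j), (1:ℝ)/(mm e:ℝ)^2)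
      ≤ ∑ j ∈ Finset.Icc 1 n, 8/(j:ℝ) := Finset.sum_le_sum step
    _ = 8 * ((harmonic n : ℚ) : ℝ) := by
        rw [harmonic_eq_sum_Icc]
        push_cast
        rw [Finset.mul_sum]
        refine Finset.sum_congr rfl fun j hj => ?_
        rw [div_eq_mul_inv]
    _ ≤ 8 * (1 + Real.log n) := by
        have := harmonic_le_one_add_log n
        linarith

lemma mm_box {n : ℕ} {e : ℤ × ℤ} (he : e ∈ box n \ {((0:ℤ),(0:ℤ))}) :
    1 ≤ mm e ∧ mm e ≤ n := by
  rw [Finset.mem_sdiff] at he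
  have hene : e ≠ 0 := by
    intro h0
    apply he.2
    rw [h0]
    simp
    rfl
  have h1 := mm_pos hene
  have hb := he.1
  rw [box, Finset.mem_Icc, Prod.le_def, Prod.le_def] at hb
  exact ⟨h1, max_le (abs_le.mpr ⟨hb.1.1, hb.2.1⟩) (abs_le.mpr ⟨hb.1.2, hb.2.2⟩)⟩

lemma W_card_le (n : ℕ) : ((W n).card : ℝ) ≤ 72 * (n:ℝ)^4 * (1 + Real.log n) := by
  rw [W, Finset.card_sigma]
  have hterm : ∀ e ∈ box n \ {((0:ℤ),(0:ℤ))},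
      (((Finset.Icc (-((n:ℤ)/mm e)) ((n:ℤ)/mm e) ×ˢ
        (Finset.Icc (-((n:ℤ)/mm e)) ((n:ℤ)/mm e) ×ˢ grid n)).card : ℝ))
        ≤ 9 * (n:ℝ)^4 * (1 / (mm e:ℝ)^2) := by
    intro e he
    obtain ⟨hm1, hm2⟩ := mm_box he
    set B : ℤ := (n:ℤ)/mm e with hBdef
    have hB0 : 0 ≤ B := Int.ediv_nonneg (by positivity) (by omega)
    have hmR : (0:ℝ) < (mm e : ℝ) := by exact_mod_cast hm1
    have hcIcc : ((Finset.Icc (-B) B).card : ℝ) = 2*(B:ℝ)+1 := by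
      rw [Int.card_Icc]
      have h2 : B + 1 - -B = 2*B+1 := by ring
      rw [h2]
      have h3 : (0:ℤ) ≤ 2*B+1 := by omega
      rw [show (((2*B+1).toNat : ℕ) : ℝ) = (((2*B+1).toNat : ℤ) : ℝ) by push_cast; ring,
        Int.toNat_of_nonneg h3]
      push_cast
      ring
    have hBle : (B:ℝ) ≤ (n:ℝ) / (mm e : ℝ) := by
      rw [le_div_iff₀ hmR]
      have := Int.ediv_mul_le (n:ℤ) (show mm e ≠ 0 by omega)
      exact_mod_cast this
    have hone : (1:ℝ) ≤ (n:ℝ) / (mm e : ℝ) := by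
      rw [le_div_iff₀ hmR]
      have : (mm e : ℝ) ≤ (n:ℝ) := by exact_mod_cast hm2
      linarith
    have hIccle : ((Finset.Icc (-B) B).card : ℝ) ≤ 3 * ((n:ℝ) / (mm e : ℝ)) := by
      rw [hcIcc]
      linarith
    have hIcc0 : (0:ℝ) ≤ ((Finset.Icc (-B) B).card : ℝ) := by positivity
    rw [Finset.card_product, Finset.card_product]
    push_cast
    calc ((Finset.Icc (-B) B).card : ℝ) * (((Finset.Icc (-B) B).card : ℝ) * ((grid n).card : ℝ))
        ≤ (3 * ((n:ℝ) / (mm e : ℝ))) * ((3 * ((n:ℝ) / (mm e : ℝ))) * ((grid n).card : ℝ)) := by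
          have hg0 : (0:ℝ) ≤ ((grid n).card : ℝ) := by positivity
          apply mul_le_mul hIccle _ (by positivity) (by positivity)
          apply mul_le_mul_of_nonneg_right hIccle hg0
      _ = 9 * (n:ℝ)^2 / (mm e:ℝ)^2 * ((grid n).card : ℝ) := by ring
      _ ≤ 9 * (n:ℝ)^4 * (1 / (mm e:ℝ)^2) := by
          rw [card_grid]
          push_cast
          apply le_of_eq
          field_simp
  rw [Nat.cast_sum]
  calc (∑ e ∈ box n \ {((0:ℤ),(0:ℤ))},
        (((Finset.Icc (-((n:ℤ)/mm e)) ((n:ℤ)/mm e) ×ˢ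
          (Finset.Icc (-((n:ℤ)/mm e)) ((n:ℤ)/mm e) ×ˢ grid n)).card) : ℝ))
      ≤ ∑ e ∈ box n \ {((0:ℤ),(0:ℤ))}, 9 * (n:ℝ)^4 * (1 / (mm e:ℝ)^2) :=
        Finset.sum_le_sum hterm
    _ = 9 * (n:ℝ)^4 * ∑ e ∈ box n \ {((0:ℤ),(0:ℤ))}, (1:ℝ) / (mm e:ℝ)^2 := by
        rw [Finset.mul_sum]
    _ ≤ 9 * (n:ℝ)^4 * (8 * (1 + Real.log n)) := by
        apply mul_le_mul_of_nonneg_left (sum_inv_mm_sq n) (by positivity)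
    _ = 72 * (n:ℝ)^4 * (1 + Real.log n) := by ring

end Stmt7Aux

set_option maxHeartbeats 1000000

/-- For any point `p ∈ [n]²`, the number of trapezoids of grid points containing `p`
is at most `C·n⁴·log n` for an absolute constant `C`. -/
theorem stmt7 :
    ∃ C : ℝ, 0 < C ∧ ∀ (n : ℕ) (p : ℤ × ℤ), inGrid n p →
      (({T : Finset (ℤ × ℤ) | p ∈ T ∧ (∀ q ∈ T, inGrid n q) ∧
          ∃ a b c : ℤ × ℤ, T = {p, a, b, c} ∧ IsTrapezoid p a b c}.ncard : ℝ))
        ≤ C * n ^ 4 * Real.log n := by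
  refine ⟨300, by norm_num, ?_⟩
  intro n p hp
  have hsub : {T : Finset (ℤ × ℤ) | p ∈ T ∧ (∀ q ∈ T, inGrid n q) ∧
      ∃ a b c : ℤ × ℤ, T = {p, a, b, c} ∧ IsTrapezoid p a b c}
      ⊆ ↑((Stmt7Aux.W n).image (Stmt7Aux.R p)) := by
    rintro T ⟨hpT, hgrid, a, b, c, hTeq, htrap⟩
    obtain ⟨hpa, hpb, hpc, hab, hac, hbc, _, hpar3⟩ := htrap
    have haT : a ∈ T := by rw [hTeq]; simp
    have hbT : b ∈ T := by rw [hTeq]; simp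
    have hcT : c ∈ T := by rw [hTeq]; simp
    have hga := hgrid a haT
    have hgb := hgrid b hbT
    have hgc := hgrid c hcT
    rcases hpar3 with hP | hP | hP
    · obtain ⟨x, hxW, hxR⟩ := Stmt7Aux.exists_rep hp hga hgb hgc (Ne.symm hpa) hP
      exact Finset.mem_coe.mpr (Finset.mem_image.mpr ⟨x, hxW, by rw [← hxR, hTeq]⟩)
    · obtain ⟨x, hxW, hxR⟩ := Stmt7Aux.exists_rep hp hgb hga hgc (Ne.symm hpb) hP
      refine Finset.mem_coe.mpr (Finset.mem_image.mpr ⟨x, hxW, ?_⟩)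
      rw [← hxR, hTeq]
      ext q
      simp only [Finset.mem_insert, Finset.mem_singleton]
      tauto
    · obtain ⟨x, hxW, hxR⟩ := Stmt7Aux.exists_rep hp hgc hga hgb (Ne.symm hpc) hP
      refine Finset.mem_coe.mpr (Finset.mem_image.mpr ⟨x, hxW, ?_⟩)
      rw [← hxR, hTeq]
      ext q
      simp only [Finset.mem_insert, Finset.mem_singleton]
      tauto
  have h1 : ({T : Finset (ℤ × ℤ) | p ∈ T ∧ (∀ q ∈ T, inGrid n q) ∧
      ∃ a b c : ℤ × ℤ, T = {p, a, b, c} ∧ IsTrapezoid p a b c}).ncard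
      ≤ ((Stmt7Aux.W n).image (Stmt7Aux.R p)).card := by
    have := Set.ncard_le_ncard hsub (Finset.finite_toSet _)
    rwa [Set.ncard_coe_finset] at this
  have h2 : ((Stmt7Aux.W n).image (Stmt7Aux.R p)).card ≤ (Stmt7Aux.W n).card :=
    Finset.card_image_le
  have hn1 : 1 ≤ n := by
    obtain ⟨a1, a2, a3, a4⟩ := hp
    have h' : (1:ℤ) ≤ (n:ℤ) := le_trans a1 a2
    exact_mod_cast h'
  by_cases hn : n = 1
  · subst hn
    have hempty : {T : Finset (ℤ × ℤ) | p ∈ T ∧ (∀ q ∈ T, inGrid 1 q) ∧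
        ∃ a b c : ℤ × ℤ, T = {p, a, b, c} ∧ IsTrapezoid p a b c} = ∅ := by
      ext T
      simp only [Set.mem_setOf_eq, Set.mem_empty_iff_false, iff_false, not_and]
      rintro hpT hgrid ⟨a, b, c, hTeq, htrap⟩
      have haT : a ∈ T := by rw [hTeq]; simp
      have hga := hgrid a haT
      obtain ⟨g1, g2, g3, g4⟩ := hga
      obtain ⟨p1, p2, p3, p4⟩ := hp
      apply htrap.1
      push_cast at *
      exact Prod.ext_iff.mpr ⟨by omega, by omega⟩
    rw [hempty]
    simp
  · have hn2 : 2 ≤ n := by omega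
    have hL : (0.6931471803 : ℝ) < Real.log n := by
      calc (0.6931471803 : ℝ) < Real.log 2 := Real.log_two_gt_d9
        _ ≤ Real.log n := Real.log_le_log (by norm_num) (by exact_mod_cast hn2)
    have hn4 : (0:ℝ) ≤ (n:ℝ)^4 := by positivity
    calc (({T : Finset (ℤ × ℤ) | p ∈ T ∧ (∀ q ∈ T, inGrid n q) ∧
          ∃ a b c : ℤ × ℤ, T = {p, a, b, c} ∧ IsTrapezoid p a b c}.ncard : ℝ))
        ≤ ((Stmt7Aux.W n).card : ℝ) := by exact_mod_cast le_trans h1 h2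
      _ ≤ 72 * (n:ℝ)^4 * (1 + Real.log n) := Stmt7Aux.W_card_le n
      _ ≤ 300 * (n:ℝ)^4 * Real.log n := by nlinarith
end
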